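/- Let ω = ℝ^ℕ carry the product topology, let (T_t)_{t≥0} be a strongly continuous semigroup of continuous linear operators on ω, and let A be its generator (which is an everywhere defined continuous linear operator). Then for every x ∈ ω and every t ≥ 0 the exponential series converges in ω and represents the semigroup: T_t x = ∑_{k=0}^∞ (t^k / k!) • A^k x. -/

import Mathlib

open Filter Topology Set

/-- Uniform finite support for the coordinate functionals of a pointwise-continuous
family of operators on `ℝ^ℕ`, via Baire category. -/
lemma unif_support (T : ℝ → (ℕ → ℝ) →L[ℝ] (ℕ → ℝ))
    (horbit : ∀ x : ℕ → ℝ, ContinuousOn (fun t : ℝ => T t x) (Set.Ici 0))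
    (b : ℝ) (hb : 0 ≤ b) (n : ℕ) :
    ∃ m : ℕ, ∀ s ∈ Set.Icc (0:ℝ) b, ∀ z : ℕ → ℝ, (∀ i, i < m → z i = 0) → T s z n = 0 := by
  set E : ℕ → Set (ℕ → ℝ) := fun j => {x | ∀ s ∈ Set.Icc (0:ℝ) b, |T s x n| ≤ j} with hE
  have hclosed : ∀ j, IsClosed (E j) := by
    intro j
    have : E j = ⋂ s ∈ Set.Icc (0:ℝ) b, {x : ℕ → ℝ | |T s x n| ≤ j} := by
      ext y; simp [hE, Set.mem_iInter]
    rw [this]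
    refine isClosed_biInter fun s _ => ?_
    exact isClosed_le (((continuous_apply n).comp (T s).continuous).abs) continuous_const
  have hcover : (⋃ j, E j) = Set.univ := by
    ext x
    simp only [Set.mem_iUnion, Set.mem_univ, iff_true]
    have hc : ContinuousOn (fun s : ℝ => T s x n) (Set.Icc 0 b) :=
      (continuous_apply n).comp_continuousOn ((horbit x).mono Set.Icc_subset_Ici_self)
    obtain ⟨C, hC⟩ := isCompact_Icc.exists_bound_of_continuousOn hc
    obtain ⟨j, hj⟩ := exists_nat_ge C
    exact ⟨j, fun s hs => le_trans (by simpa [Real.norm_eq_abs] using hC s hs) hj⟩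
  obtain ⟨j, hj⟩ := nonempty_interior_of_iUnion_of_closed hclosed hcover
  obtain ⟨x₀, hx₀⟩ := hj
  have hnhds : E j ∈ 𝓝 x₀ := mem_interior_iff_mem_nhds.1 hx₀
  rw [nhds_pi, Filter.mem_pi] at hnhds
  obtain ⟨I, hIfin, tset, htmem, hsub⟩ := hnhds
  obtain ⟨M, hM⟩ := hIfin.bddAbove
  refine ⟨M + 1, fun s hs z hz => ?_⟩
  have key : ∀ c : ℝ, |T s (x₀ + c • z) n| ≤ j := by
    intro c
    have hmem : x₀ + c • z ∈ E j := by
      apply hsub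
      intro i hi
      have hzi : z i = 0 := hz i (Nat.lt_succ_of_le (hM hi))
      have : (x₀ + c • z) i = x₀ i := by simp [hzi]
      rw [this]
      exact mem_of_mem_nhds (htmem i)
    exact hmem s hs
  have hx0mem : |T s x₀ n| ≤ j := by
    have := key 0
    simpa using this
  by_contra hne
  have hw : |T s z n| > 0 := abs_pos.2 hne
  set c : ℝ := (2 * j + 1) / |T s z n| with hc
  have hcnn : 0 ≤ c := div_nonneg (by positivity) (le_of_lt hw)
  have hval : T s (x₀ + c • z) n = T s x₀ n + c * T s z n := by
    rw [map_add, map_smul]; simp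
  have h1 := key c
  have h2 : |c * T s z n| ≤ |T s (x₀ + c • z) n| + |T s x₀ n| := by
    rw [hval]
    calc |c * T s z n| = |(T s x₀ n + c * T s z n) - T s x₀ n| := by ring_nf
      _ ≤ |T s x₀ n + c * T s z n| + |T s x₀ n| := abs_sub _ _
  have h3 : |c * T s z n| = 2 * j + 1 := by
    rw [abs_mul, abs_of_nonneg hcnn, hc, div_mul_cancel₀]
    exact ne_of_gt hw
  have : (2:ℝ) * j + 1 ≤ 2 * j := by
    rw [← h3]
    calc |c * T s z n| ≤ |T s (x₀ + c • z) n| + |T s x₀ n| := h2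
      _ ≤ j + j := add_le_add h1 hx0mem
      _ = 2 * j := by ring
  linarith

/-- Representation of a functional vanishing on sequences supported off `[0,m)`. -/
lemma rep_lemma (m : ℕ) (L : (ℕ → ℝ) →ₗ[ℝ] ℝ)
    (hL : ∀ z : ℕ → ℝ, (∀ i, i < m → z i = 0) → L z = 0) (y : ℕ → ℝ) :
    L y = ∑ i : Fin m, y ↑i * L (Pi.single (↑i : ℕ) 1) := by
  set e : ℕ → (ℕ → ℝ) := fun i => Pi.single i 1 with he
  have hz : ∀ i, i < m → (y - ∑ j : Fin m, y ↑j • e ↑j) i = 0 := by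
    intro i hi
    have hsum : (∑ j : Fin m, y ↑j • e ↑j) i = y i := by
      rw [Finset.sum_apply]
      rw [Finset.sum_eq_single (⟨i, hi⟩ : Fin m)]
      · simp [he]
      · intro j _ hj
        have hne : i ≠ (↑j : ℕ) := by
          intro h
          exact hj (Fin.val_injective h.symm)
        simp [he, Pi.single_apply, hne]
      · simp
    rw [Pi.sub_apply, hsum, sub_self]
  have h0 := hL _ hz
  rw [map_sub] at h0
  have : L y = L (∑ j : Fin m, y ↑j • e ↑j) := by linarith
  rw [this, map_sum]
  refine Finset.sum_congr rfl fun j _ => ?_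
  rw [map_smul]
  simp [he, mul_comm]

set_option maxHeartbeats 2000000 in
/-- For a strongly continuous semigroup on `ω = ℝ^ℕ` with
(continuous linear) generator `A`, the exponential series converges and
represents the semigroup: `T_t x = ∑_{k=0}^∞ (t^k/k!) • A^k x`. -/
theorem stmt4
    (T : ℝ → (ℕ → ℝ) →L[ℝ] (ℕ → ℝ))
    (hT0 : T 0 = ContinuousLinearMap.id ℝ (ℕ → ℝ))
    (hTadd : ∀ s t : ℝ, 0 ≤ s → 0 ≤ t → T (s + t) = (T s).comp (T t))
    (horbit : ∀ x : ℕ → ℝ, ContinuousOn (fun t : ℝ => T t x) (Set.Ici 0))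
    (A : (ℕ → ℝ) →L[ℝ] (ℕ → ℝ))
    (hA : ∀ x : ℕ → ℝ,
      Tendsto (fun h : ℝ => h⁻¹ • (T h x - x)) (𝓝[>] 0) (𝓝 (A x))) :
    ∀ x : ℕ → ℝ, ∀ t : ℝ, 0 ≤ t →
      Tendsto (fun N : ℕ => ∑ k ∈ Finset.range N,
          (t ^ k / (Nat.factorial k : ℝ)) • (A ^ k) x) atTop (𝓝 (T t x)) := by
  intro x t ht
  rw [tendsto_pi_nhds]
  intro n
  set b : ℝ := t + 1 with hbdef
  have hb0 : (0:ℝ) < b := by linarith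
  have htb : t < b := by linarith
  obtain ⟨m, hsupp⟩ := unif_support T horbit b (le_of_lt hb0) n
  -- n < m
  have hnm : n < m := by
    by_contra hge
    have h0 := hsupp 0 ⟨le_refl 0, le_of_lt hb0⟩ (Pi.single n 1)
      (fun i hi => Pi.single_eq_of_ne (by omega) 1)
    rw [hT0] at h0
    simp at h0
  set e : ℕ → (ℕ → ℝ) := fun i => Pi.single i 1 with he
  set v : ℝ → Fin m → ℝ := fun s i => T s (e ↑i) n with hv
  -- (F1) representation of the rows of T s
  have F1 : ∀ s ∈ Set.Icc (0:ℝ) b, ∀ y : ℕ → ℝ,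
      T s y n = ∑ i : Fin m, y ↑i * v s i := by
    intro s hs y
    have hL : ∀ z : ℕ → ℝ, (∀ i, i < m → z i = 0) →
        ((LinearMap.proj n : (ℕ → ℝ) →ₗ[ℝ] ℝ).comp
          ((T s : (ℕ → ℝ) →ₗ[ℝ] (ℕ → ℝ)))) z = 0 := fun z hz => hsupp s hs z hz
    have h := rep_lemma m _ hL y
    simpa [he, hv] using h
  -- (key1) the row n of T s ∘ A also vanishes off [0,m)
  have key1 : ∀ s ∈ Set.Ico (0:ℝ) b, ∀ z : ℕ → ℝ,
      (∀ i, i < m → z i = 0) → T s (A z) n = 0 := by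
    intro s hs z hz
    have htend : Tendsto (fun h : ℝ => T s (h⁻¹ • (T h z - z)) n) (𝓝[>] 0)
        (𝓝 (T s (A z) n)) := by
      have hc : Continuous fun y : ℕ → ℝ => T s y n :=
        (continuous_apply n).comp (T s).continuous
      exact (hc.tendsto _).comp (hA z)
    have hev : (fun h : ℝ => T s (h⁻¹ • (T h z - z)) n) =ᶠ[𝓝[>] (0:ℝ)] fun _ => 0 := by
      have hmem : Set.Ioo (0:ℝ) (b - s) ∈ 𝓝[>] (0:ℝ) :=
        Ioo_mem_nhdsGT_of_mem ⟨le_refl 0, by linarith [hs.2]⟩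
      filter_upwards [hmem] with h hh
      have h0 : (0:ℝ) ≤ h := le_of_lt hh.1
      have hTs : T s (T h z) = T (s + h) z := by rw [hTadd s h hs.1 h0]; rfl
      have hz1 : T (s + h) z n = 0 :=
        hsupp (s + h) ⟨by linarith [hs.1], by linarith [hh.2]⟩ z hz
      have hz2 : T s z n = 0 := hsupp s ⟨hs.1, le_of_lt hs.2⟩ z hz
      calc T s (h⁻¹ • (T h z - z)) n = h⁻¹ * (T s (T h z) n - T s z n) := by
            rw [map_smul, map_sub]; simp
        _ = 0 := by rw [hTs, hz1, hz2]; ring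
    have h0 : Tendsto (fun _ : ℝ => (0:ℝ)) (𝓝[>] (0:ℝ)) (𝓝 (T s (A z) n)) :=
      htend.congr' hev
    exact tendsto_nhds_unique h0 tendsto_const_nhds
  -- representation of the rows of T s ∘ A
  have keystar : ∀ s ∈ Set.Ico (0:ℝ) b, ∀ y : ℕ → ℝ,
      T s (A y) n = ∑ i : Fin m, y ↑i * (T s (A (e ↑i)) n) := by
    intro s hs y
    have hL : ∀ z : ℕ → ℝ, (∀ i, i < m → z i = 0) →
        ((LinearMap.proj n : (ℕ → ℝ) →ₗ[ℝ] ℝ).comp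
          (((T s : (ℕ → ℝ) →ₗ[ℝ] (ℕ → ℝ))).comp
            (A : (ℕ → ℝ) →ₗ[ℝ] (ℕ → ℝ)))) z = 0 := fun z hz => key1 s hs z hz
    have h := rep_lemma m _ hL y
    simpa [he] using h
  set w : ℝ → Fin m → ℝ := fun s i => T s (A (e ↑i)) n with hw
  set B : (Fin m → ℝ) →L[ℝ] (Fin m → ℝ) :=
    LinearMap.toContinuousLinearMap
      (Matrix.mulVecLin (Matrix.of fun i j : Fin m => A (e ↑i) ↑j)) with hB
  have hBapp : ∀ (u : Fin m → ℝ) (i : Fin m), B u i = ∑ j : Fin m, A (e ↑i) ↑j * u j := by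
    intro u i
    simp [hB, Matrix.mulVecLin_apply, Matrix.mulVec, dotProduct]
  have hwB : ∀ s ∈ Set.Icc (0:ℝ) b, B (v s) = w s := by
    intro s hs; funext i
    rw [hBapp]
    exact (F1 s hs (A (e ↑i))).symm
  set V : Submodule ℝ (Fin m → ℝ) := Submodule.span ℝ (v '' Set.Ico 0 b) with hV
  have hvmem : ∀ s ∈ Set.Ico (0:ℝ) b, v s ∈ V := fun s hs =>
    Submodule.subset_span ⟨s, hs, rfl⟩
  -- the pairing identity for generators of V
  have hPv : ∀ s ∈ Set.Ico (0:ℝ) b, ∀ y : ℕ → ℝ,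
      ∑ i : Fin m, v s i * A y ↑i = ∑ i : Fin m, B (v s) i * y ↑i := by
    intro s hs y
    have h1 : ∑ i : Fin m, v s i * A y ↑i = T s (A y) n := by
      rw [F1 s (Set.Ico_subset_Icc_self hs) (A y)]
      exact Finset.sum_congr rfl fun i _ => mul_comm _ _
    have h2 : T s (A y) n = ∑ i : Fin m, w s i * y ↑i := by
      rw [keystar s hs y]
      exact Finset.sum_congr rfl fun i _ => mul_comm _ _
    rw [h1, h2, hwB s (Set.Ico_subset_Icc_self hs)]
  have hPspan : ∀ u ∈ V, ∀ y : ℕ → ℝ,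
      ∑ i : Fin m, u i * A y ↑i = ∑ i : Fin m, B u i * y ↑i := by
    intro u hu
    induction hu using Submodule.span_induction with
    | mem u hu => obtain ⟨s, hs, rfl⟩ := hu; exact hPv s hs
    | zero => intro y; simp
    | add u1 u2 hu1 hu2 ih1 ih2 =>
      intro y
      simp only [Pi.add_apply, map_add, ContinuousLinearMap.add_apply, add_mul,
        Finset.sum_add_distrib]
      rw [ih1 y, ih2 y]
    | smul c u hu ih =>
      intro y
      simp only [Pi.smul_apply, map_smul, ContinuousLinearMap.smul_apply, smul_eq_mul,
        mul_assoc]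
      rw [← Finset.mul_sum, ← Finset.mul_sum, ih y]
  -- right derivative of v
  have hvderiv : ∀ s : ℝ, 0 ≤ s → HasDerivWithinAt v (w s) (Set.Ici s) s := by
    intro s hs
    rw [hasDerivWithinAt_pi]
    intro i
    rw [hasDerivWithinAt_iff_tendsto_slope, Set.Ici_sdiff_left]
    have h1 : Tendsto (fun h : ℝ => T s (h⁻¹ • (T h (e ↑i) - e ↑i)) n) (𝓝[>] 0)
        (𝓝 (w s i)) := by
      have hc : Continuous fun y : ℕ → ℝ => T s y n :=
        (continuous_apply n).comp (T s).continuous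
      exact (hc.tendsto _).comp (hA (e ↑i))
    have h2 : Tendsto (fun s' : ℝ => s' - s) (𝓝[>] s) (𝓝[>] (0:ℝ)) := by
      refine tendsto_nhdsWithin_of_tendsto_nhds_of_eventually_within _ ?_ ?_
      · have hbase : Tendsto (fun s' : ℝ => s' - s) (𝓝 s) (𝓝 (s - s)) :=
          (continuous_id.sub continuous_const).tendsto s
        simpa using hbase.mono_left nhdsWithin_le_nhds
      · filter_upwards [self_mem_nhdsWithin] with s' hs'
        exact sub_pos.2 (Set.mem_Ioi.1 hs')
    refine (h1.comp h2).congr' ?_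
    filter_upwards [self_mem_nhdsWithin] with s' hs'
    have hpos : 0 < s' - s := sub_pos.2 hs'
    have hT' : T s' (e ↑i) = T s (T (s' - s) (e ↑i)) := by
      have hadd := hTadd s (s' - s) hs (le_of_lt hpos)
      rw [show s + (s' - s) = s' by ring] at hadd
      rw [hadd]; rfl
    show T s ((s' - s)⁻¹ • (T (s' - s) (e ↑i) - e ↑i)) n = slope (fun u => v u i) s s'
    rw [slope_def_field]
    rw [map_smul, map_sub, ← hT']
    simp [hv, div_eq_inv_mul]
  -- w s belongs to V
  have hwV : ∀ s ∈ Set.Ico (0:ℝ) b, w s ∈ V := by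
    intro s hs
    have hclosed : IsClosed (V : Set (Fin m → ℝ)) := Submodule.closed_of_finiteDimensional V
    have hslope : Tendsto (slope v s) (𝓝[>] s) (𝓝 (w s)) := by
      have h := hasDerivWithinAt_iff_tendsto_slope.1 (hvderiv s hs.1)
      rwa [Set.Ici_sdiff_left] at h
    refine hclosed.mem_of_tendsto hslope ?_
    have hlt : Set.Iio b ∈ 𝓝[>] s := nhdsWithin_le_nhds (Iio_mem_nhds hs.2)
    filter_upwards [self_mem_nhdsWithin, hlt] with s' h1 h2
    show slope v s s' ∈ V
    simp only [slope]
    exact V.smul_mem _ (V.sub_mem (hvmem s' ⟨le_trans hs.1 (le_of_lt h1), h2⟩) (hvmem s hs))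
  have hBV : ∀ u ∈ V, B u ∈ V := by
    intro u hu
    induction hu using Submodule.span_induction with
    | mem u hu =>
      obtain ⟨s, hs, rfl⟩ := hu
      rw [hwB s (Set.Ico_subset_Icc_self hs)]
      exact hwV s hs
    | zero => simp
    | add u1 u2 hu1 hu2 ih1 ih2 => rw [map_add]; exact V.add_mem ih1 ih2
    | smul c u hu ih => rw [map_smul]; exact V.smul_mem c ih
  have hBkV : ∀ k : ℕ, ∀ u ∈ V, (B ^ k) u ∈ V := by
    intro k
    induction k with
    | zero => intro u hu; simpa using hu
    | succ k ih =>
      intro u hu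
      rw [pow_succ', ContinuousLinearMap.mul_apply]
      exact hBV _ (ih u hu)
  have hAk : ∀ k : ℕ, ∀ u ∈ V, ∀ y : ℕ → ℝ,
      ∑ i : Fin m, u i * (A ^ k) y ↑i = ∑ i : Fin m, (B ^ k) u i * y ↑i := by
    intro k
    induction k with
    | zero => intro u hu y; simp
    | succ k ih =>
      intro u hu y
      have h1 : (A ^ (k + 1)) y = (A ^ k) (A y) := by
        rw [pow_succ, ContinuousLinearMap.mul_apply]
      have h2 : (B ^ (k + 1)) u = B ((B ^ k) u) := by
        rw [pow_succ', ContinuousLinearMap.mul_apply]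
      rw [h1, h2, ih u hu (A y), hPspan _ (hBkV k u hu) y]
  -- initial value
  have hv0 : ∀ y : ℕ → ℝ, ∑ i : Fin m, v 0 i * y ↑i = y n := by
    intro y
    have hvi : ∀ i : Fin m, v 0 i = if (↑i : ℕ) = n then 1 else 0 := by
      intro i
      have : v 0 i = T 0 (e ↑i) n := rfl
      rw [this, hT0]
      simp [he, Pi.single_apply, eq_comm]
    rw [Finset.sum_congr rfl fun i _ => by rw [hvi i]]
    rw [Finset.sum_eq_single (⟨n, hnm⟩ : Fin m)]
    · simp
    · intro j _ hj
      have hne : (↑j : ℕ) ≠ n := fun h => hj (Fin.val_injective h)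
      simp [hne]
    · simp
  have hv0V : v 0 ∈ V := hvmem 0 ⟨le_refl 0, hb0⟩
  -- solve the ODE: v t = exp (t • B) (v 0)
  have hexp : v t = NormedSpace.exp (t • B) (v 0) := by
    set g : ℝ → Fin m → ℝ := fun s => NormedSpace.exp ((t - s) • B) (v s) with hg
    have hgderiv : ∀ s ∈ Set.Ico (0:ℝ) t, HasDerivWithinAt g (0 : Fin m → ℝ) (Set.Ici s) s := by
      intro s hs
      have h1 : HasDerivAt (fun u : ℝ => NormedSpace.exp (u • B))
          (NormedSpace.exp ((t - s) • B) * B) (t - s) := hasDerivAt_exp_smul_const B (t - s)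
      have h2 : HasDerivWithinAt (fun s' : ℝ => t - s') (-1 : ℝ) (Set.Ici s) s := by
        simpa using ((hasDerivAt_id s).const_sub t).hasDerivWithinAt
      have h3 : HasDerivWithinAt (fun s' : ℝ => NormedSpace.exp ((t - s') • B))
          ((-1 : ℝ) • (NormedSpace.exp ((t - s) • B) * B)) (Set.Ici s) s :=
        h1.scomp_hasDerivWithinAt s h2
      have h4 : HasDerivWithinAt v (w s) (Set.Ici s) s := hvderiv s hs.1
      have h5 := h3.clm_apply h4
      have hws : B (v s) = w s := hwB s ⟨hs.1, by linarith [hs.2]⟩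
      have hzero : ((-1 : ℝ) • (NormedSpace.exp ((t - s) • B) * B)) (v s)
          + (NormedSpace.exp ((t - s) • B)) (w s) = 0 := by
        rw [← hws]
        simp [ContinuousLinearMap.mul_apply]
      rw [← hzero]
      exact h5
    have hgcont : ContinuousOn g (Set.Icc 0 t) := by
      have hc1 : Continuous fun s : ℝ => NormedSpace.exp ((t - s) • B) :=
        (continuous_iff_continuousAt.2 fun u =>
          (hasDerivAt_exp_smul_const (𝕂 := ℝ) B u).continuousAt).comp
          (continuous_const.sub continuous_id)
      have hc2 : ContinuousOn v (Set.Icc 0 t) := by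
        rw [continuousOn_pi]
        intro i
        exact (continuous_apply n).comp_continuousOn
          ((horbit (e ↑i)).mono fun u hu => hu.1)
      exact isBoundedBilinearMap_apply.continuous.comp_continuousOn
        (hc1.continuousOn.prodMk hc2)
    have hbnd := norm_image_sub_le_of_norm_deriv_right_le_segment hgcont hgderiv
      (C := 0) (fun s _ => by simp) t (right_mem_Icc.2 ht)
    have hgt : g t = g 0 := by
      have h0 : ‖g t - g 0‖ ≤ 0 := by simpa using hbnd
      have := norm_le_zero_iff.1 h0
      exact sub_eq_zero.1 this
    have hgt1 : g t = v t := by simp [hg]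
    have hgt0 : g 0 = NormedSpace.exp (t • B) (v 0) := by simp [hg]
    rw [← hgt1, hgt, hgt0]
  -- convergence of the exponential series in operator norm
  have hsum : HasSum (fun k : ℕ => ((Nat.factorial k : ℝ))⁻¹ • (t • B) ^ k)
      (NormedSpace.exp (t • B)) := by
    rw [NormedSpace.exp_eq_tsum (𝕂 := ℝ)]
    exact (NormedSpace.expSeries_summable' (𝕂 := ℝ) (t • B)).hasSum
  have htendB := hsum.tendsto_sum_nat
  have hΦcont : Continuous fun C : (Fin m → ℝ) →L[ℝ] (Fin m → ℝ) =>
      ∑ i : Fin m, C (v 0) i * x ↑i := by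
    apply continuous_finset_sum
    intro i _
    have hc : Continuous fun C : (Fin m → ℝ) →L[ℝ] (Fin m → ℝ) => C (v 0) :=
      isBoundedBilinearMap_apply.continuous.comp (continuous_id.prodMk continuous_const)
    exact ((continuous_apply i).comp hc).mul continuous_const
  have hfinal := (hΦcont.tendsto _).comp htendB
  have heq : ∀ N : ℕ,
      (∑ i : Fin m, ((∑ k ∈ Finset.range N, ((Nat.factorial k : ℝ))⁻¹ • (t • B) ^ k) (v 0)) i
        * x ↑i)
      = ∑ k ∈ Finset.range N, (t ^ k / (Nat.factorial k : ℝ)) * ((A ^ k) x n) := by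
    intro N
    have hterm : ∀ k : ℕ, ((Nat.factorial k : ℝ))⁻¹ • (t • B) ^ k
        = (t ^ k / (Nat.factorial k : ℝ)) • B ^ k := by
      intro k
      rw [smul_pow, smul_smul, div_eq_mul_inv, mul_comm]
    calc (∑ i : Fin m, ((∑ k ∈ Finset.range N, ((Nat.factorial k : ℝ))⁻¹ • (t • B) ^ k) (v 0)) i
            * x ↑i)
        = ∑ i : Fin m, (∑ k ∈ Finset.range N,
            (t ^ k / (Nat.factorial k : ℝ)) * ((B ^ k) (v 0) i)) * x ↑i := by
          refine Finset.sum_congr rfl fun i _ => ?_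
          congr 1
          rw [ContinuousLinearMap.sum_apply, Finset.sum_apply]
          refine Finset.sum_congr rfl fun k _ => ?_
          rw [hterm k]
          simp
      _ = ∑ k ∈ Finset.range N, (t ^ k / (Nat.factorial k : ℝ)) * ((A ^ k) x n) := by
          simp only [Finset.sum_mul]
          rw [Finset.sum_comm]
          refine Finset.sum_congr rfl fun k _ => ?_
          have hid := hAk k (v 0) hv0V x
          have hn0 := hv0 ((A ^ k) x)
          calc ∑ i : Fin m, (t ^ k / (Nat.factorial k : ℝ)) * ((B ^ k) (v 0) i) * x ↑i
              = (t ^ k / (Nat.factorial k : ℝ)) * ∑ i : Fin m, (B ^ k) (v 0) i * x ↑i := by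
                rw [Finset.mul_sum]
                exact Finset.sum_congr rfl fun i _ => mul_assoc _ _ _
            _ = (t ^ k / (Nat.factorial k : ℝ)) * ((A ^ k) x n) := by rw [← hid, hn0]
  have hlim : (∑ i : Fin m, (NormedSpace.exp (t • B)) (v 0) i * x ↑i) = T t x n := by
    rw [← hexp, F1 t ⟨ht, le_of_lt htb⟩ x]
    exact Finset.sum_congr rfl fun i _ => mul_comm _ _
  have hmain : Tendsto (fun N : ℕ => ∑ k ∈ Finset.range N,
      (t ^ k / (Nat.factorial k : ℝ)) * ((A ^ k) x n)) atTop (𝓝 (T t x n)) := by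
    have hfun : (fun N : ℕ => ∑ i : Fin m,
        ((∑ k ∈ Finset.range N, ((Nat.factorial k : ℝ))⁻¹ • (t • B) ^ k) (v 0)) i * x ↑i)
        = fun N : ℕ => ∑ k ∈ Finset.range N,
            (t ^ k / (Nat.factorial k : ℝ)) * ((A ^ k) x n) := funext heq
    rw [← hlim, ← hfun]
    exact hfinal
  refine hmain.congr fun N => ?_
  rw [Finset.sum_apply]
  exact Finset.sum_congr rfl fun k _ => rfl
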